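/- Define $Y = \{0\} \cup \{(a, 1/n) : a \in \{0,1\}^{\mathbb{N}}, n \ge 1\}$ where $(a, 1/n) \to 0$ as $n \to \infty$ for every $a$. Define continuous maps $g_n$ on $Y$ by $g_n((a,1/i)) = (\sigma(a), 1/(i+1))$ if $i < n$ and $g_n(y) = y$ otherwise, where $\sigma$ is the left shift on $\{0,1\}^{\mathbb{N}}$. Then $h_{top}(Y, \{g_n\}) = 0$. -/

import Mathlib

open Filter MeasureTheory

noncomputable section

def compSeq {X : Type*} (f : ℕ → X → X) : ℕ → X → X
  | 0 => id
  | n + 1 => f n ∘ compSeq f n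

/-- `E` is an `(n, ε)`-separated set for the nonautonomous system `(X, f)`
with respect to the distance function `d`. -/
def IsSeparatedSet {X : Type*} (d : X → X → ℝ) (f : ℕ → X → X) (n : ℕ) (ε : ℝ)
    (E : Set X) : Prop :=
  ∀ x ∈ E, ∀ y ∈ E, x ≠ y → ∃ j < n, ε < d (compSeq f j x) (compSeq f j y)

/-- `F` is an `(n, ε)`-spanning set for the nonautonomous system `(X, f)`. -/
def IsSpanningSet {X : Type*} (d : X → X → ℝ) (f : ℕ → X → X) (n : ℕ) (ε : ℝ)
    (F : Set X) : Prop :=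
  ∀ x : X, ∃ y ∈ F, ∀ j < n, d (compSeq f j x) (compSeq f j y) < ε

/-- maximal cardinality of an `(n, ε)`-separated set. -/
def sepNum {X : Type*} (d : X → X → ℝ) (f : ℕ → X → X) (n : ℕ) (ε : ℝ) : ℕ :=
  sSup {c | ∃ E : Finset X, IsSeparatedSet d f n ε ↑E ∧ E.card = c}

/-- minimal cardinality of an `(n, ε)`-spanning set. -/
def spanNum {X : Type*} (d : X → X → ℝ) (f : ℕ → X → X) (n : ℕ) (ε : ℝ) : ℕ :=
  sInf {c | ∃ F : Finset X, IsSpanningSet d f n ε ↑F ∧ F.card = c}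

/-- Topological entropy of a nonautonomous dynamical system, via separated sets. -/
def nadsEntropy {X : Type*} (d : X → X → ℝ) (f : ℕ → X → X) : EReal :=
  ⨆ (ε : ℝ) (_ : 0 < ε),
    atTop.limsup fun n : ℕ => ((Real.log (sepNum d f n ε) / n : ℝ) : EReal)

end

/-- The standard embedding of the Cantor space `{0,1}^ℕ` into `ℝ`
(base-3 expansion with digits 0 and 2). -/
noncomputable def cantorEmb (a : ℕ → Bool) : ℝ :=
  ∑' i : ℕ, (if a i then 2 else 0) / 3 ^ (i + 1)

/-- The space `X = {0} ∪ {1} ∪ {a × (1/n) : a ∈ Σ₂, n ≥ 1}`: `Sum.inl false`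
is the point `0`, `Sum.inl true` is the point `1`, and `Sum.inr (a, m)`
is the point `a × 1/(m+1)`. -/
def XSpace : Type := Bool ⊕ ((ℕ → Bool) × ℕ)

/-- The embedding of `XSpace` into `ℝ³` realizing the required topology:
points `a × 1/n` with `a₀ = 0` converge to `0` and those with `a₀ = 1`
converge to `1` as `n → ∞`. -/
noncomputable def iotaX : XSpace → ℝ × ℝ × ℝ
  | Sum.inl b => ((if b then 1 else 0), 0, 0)
  | Sum.inr (a, m) => ((if a 0 then 1 else 0), 1 / (m + 1), cantorEmb a / (m + 1))

/-- The metric on `XSpace`, pulled back from `ℝ³`. -/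
noncomputable def distX (p q : XSpace) : ℝ := dist (iotaX p) (iotaX q)

/-- `fX n` is the map `f_{n+1}` of the paper: it sends `a × 1/i` to
`σ(a) × 1/(i+1)` when `i < n + 1` (here `i = m + 1`) and fixes all other points. -/
def fX (n : ℕ) : XSpace → XSpace
  | Sum.inr (a, m) => if m < n then Sum.inr (fun j => a (j + 1), m + 1) else Sum.inr (a, m)
  | x => x

/-- The space `Y = {0} ∪ {a × (1/n) : a ∈ Σ₂, n ≥ 1}`: `Sum.inl ()` is the
point `0` and `Sum.inr (a, m)` is the point `a × 1/(m+1)`. -/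
def YSpace : Type := Unit ⊕ ((ℕ → Bool) × ℕ)

/-- The embedding of `YSpace` into `ℝ²` realizing the required topology:
all points `a × 1/n` converge to `0` as `n → ∞`. -/
noncomputable def iotaY : YSpace → ℝ × ℝ
  | Sum.inl _ => (0, 0)
  | Sum.inr (a, m) => (1 / (m + 1), cantorEmb a / (m + 1))

/-- The metric on `YSpace`, pulled back from `ℝ²`. -/
noncomputable def distY (p q : YSpace) : ℝ := dist (iotaY p) (iotaY q)

/-- `gY n` is the map `g_{n+1}` of the paper, the same formula as `fX n`. -/
def gY (n : ℕ) : YSpace → YSpace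
  | Sum.inr (a, m) => if m < n then Sum.inr (fun j => a (j + 1), m + 1) else Sum.inr (a, m)
  | y => y


open Filter

lemma cantorEmb_term_nonneg (a : ℕ → Bool) (i : ℕ) :
    0 ≤ (if a i then (2:ℝ) else 0) / 3 ^ (i + 1) := by
  apply div_nonneg _ (by positivity)
  split <;> norm_num

lemma cantorEmb_term_le (a : ℕ → Bool) (i : ℕ) :
    (if a i then (2:ℝ) else 0) / 3 ^ (i + 1) ≤ 2 / 3 ^ (i + 1) := by
  have h3 : (0:ℝ) < 3 ^ (i+1) := by positivity
  rw [div_le_div_iff₀ h3 h3]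
  split <;> nlinarith

lemma summable_cantor_bound :
    Summable (fun i : ℕ => (2:ℝ) / 3 ^ (i + 1)) := by
  have h : Summable (fun i : ℕ => (2/3 : ℝ) * (1/3) ^ i) :=
    (summable_geometric_of_lt_one (by norm_num) (by norm_num)).mul_left _
  refine h.congr fun i => ?_
  rw [pow_succ]
  field_simp
  rw [← mul_pow]; norm_num

lemma cantorEmb_summable (a : ℕ → Bool) :
    Summable (fun i : ℕ => (if a i then (2:ℝ) else 0) / 3 ^ (i + 1)) :=
  Summable.of_nonneg_of_le (cantorEmb_term_nonneg a) (cantorEmb_term_le a)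
    summable_cantor_bound

lemma cantorEmb_nonneg (a : ℕ → Bool) : 0 ≤ cantorEmb a :=
  tsum_nonneg (cantorEmb_term_nonneg a)

lemma tsum_cantor_bound : ∑' i : ℕ, (2:ℝ) / 3 ^ (i + 1) = 1 := by
  have h : ∀ i : ℕ, (2:ℝ) / 3 ^ (i+1) = (2/3) * (1/3) ^ i := by
    intro i
    rw [pow_succ]
    field_simp
    rw [← mul_pow]; norm_num
  rw [tsum_congr h, tsum_mul_left, tsum_geometric_of_lt_one (by norm_num) (by norm_num)]
  norm_num

lemma cantorEmb_le_one (a : ℕ → Bool) : cantorEmb a ≤ 1 := by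
  rw [cantorEmb, ← tsum_cantor_bound]
  exact Summable.tsum_le_tsum (cantorEmb_term_le a) (cantorEmb_summable a) summable_cantor_bound

lemma iotaY_inr (a : ℕ → Bool) (m : ℕ) :
    iotaY (Sum.inr (a, m)) = (1 / ((m:ℝ) + 1), cantorEmb a / ((m:ℝ) + 1)) := rfl

lemma iotaY_inl (u : Unit) : iotaY (Sum.inl u) = ((0:ℝ), (0:ℝ)) := rfl

lemma iotaY_mem (y : YSpace) :
    0 ≤ (iotaY y).1 ∧ (iotaY y).1 ≤ 1 ∧ 0 ≤ (iotaY y).2 ∧ (iotaY y).2 ≤ 1 := by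
  cases y with
  | inl u => rw [iotaY_inl]; norm_num
  | inr p =>
    obtain ⟨a, m⟩ := p
    rw [iotaY_inr]
    have h1 : (0:ℝ) < (m:ℝ) + 1 := by positivity
    have h2 : (1:ℝ) ≤ (m:ℝ) + 1 := by
      have : (0:ℝ) ≤ (m:ℝ) := Nat.cast_nonneg m
      linarith
    refine ⟨by positivity, ?_, div_nonneg (cantorEmb_nonneg a) h1.le, ?_⟩
    · rw [div_le_one h1]; exact h2
    · rw [div_le_one h1]; exact (cantorEmb_le_one a).trans h2

lemma dist_iotaY_inr (a : ℕ → Bool) (m : ℕ) :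
    dist (iotaY (Sum.inr (a, m))) (((0:ℝ), (0:ℝ))) ≤ 1 / ((m:ℝ) + 1) := by
  have h1 : (0:ℝ) < (m:ℝ) + 1 := by positivity
  rw [iotaY_inr, Prod.dist_eq]
  apply max_le
  · rw [Real.dist_eq, sub_zero, abs_of_nonneg (by positivity)]
  · rw [Real.dist_eq, sub_zero, abs_of_nonneg (div_nonneg (cantorEmb_nonneg a) h1.le)]
    gcongr
    exact cantorEmb_le_one a

lemma gY_inl (n : ℕ) (u : Unit) : gY n (Sum.inl u) = Sum.inl u := rfl

lemma gY_inr (n : ℕ) (a : ℕ → Bool) (m : ℕ) :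
    gY n (Sum.inr (a, m)) =
      if m < n then Sum.inr (fun j => a (j + 1), m + 1) else Sum.inr (a, m) := rfl

lemma compSeq_gY_inl (j : ℕ) (u : Unit) : compSeq gY j (Sum.inl u) = Sum.inl u := by
  induction j with
  | zero => rfl
  | succ n ih => show gY n (compSeq gY n (Sum.inl u)) = Sum.inl u; rw [ih, gY_inl]

lemma compSeq_gY_inr (j : ℕ) (a : ℕ → Bool) (m : ℕ) :
    ∃ b : ℕ → Bool, compSeq gY j (Sum.inr (a, m)) = Sum.inr (b, max m (j - 1)) := by
  induction j with
  | zero => exact ⟨a, by simp [compSeq]; rfl⟩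
  | succ n ih =>
    obtain ⟨b, hb⟩ := ih
    show ∃ b' : ℕ → Bool, gY n (compSeq gY n (Sum.inr (a, m))) = Sum.inr (b', max m (n + 1 - 1))
    rw [hb, gY_inr]
    rcases Nat.lt_or_ge m n with hm | hm
    · refine ⟨fun j => b (j + 1), ?_⟩
      rw [if_pos (show max m (n - 1) < n by omega)]
      have h : max m (n - 1) + 1 = max m (n + 1 - 1) := by omega
      rw [h]
    · refine ⟨b, ?_⟩
      rw [if_neg (show ¬ max m (n - 1) < n by omega)]
      have h : max m (n - 1) = max m (n + 1 - 1) := by omega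
      rw [h]

lemma dist_compSeq_le (x : YSpace) (j : ℕ) (hj : 1 ≤ j) :
    dist (iotaY (compSeq gY j x)) (((0:ℝ), (0:ℝ))) ≤ 1 / (j:ℝ) := by
  have hjpos : (0:ℝ) < (j:ℝ) := by exact_mod_cast hj
  cases x with
  | inl u =>
    rw [compSeq_gY_inl, iotaY_inl, dist_self]
    positivity
  | inr p =>
    obtain ⟨a, m⟩ := p
    obtain ⟨b, hb⟩ := compSeq_gY_inr j a m
    rw [hb]
    refine (dist_iotaY_inr b _).trans ?_
    have hle : (j:ℝ) ≤ ((max m (j - 1) : ℕ) : ℝ) + 1 := by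
      have : j ≤ max m (j - 1) + 1 := by omega
      exact_mod_cast this
    exact one_div_le_one_div_of_le hjpos hle

lemma abs_sub_lt_of_floor_div_eq {u v ε : ℝ} (hε : 0 < ε) (h : ⌊u / ε⌋ = ⌊v / ε⌋) :
    |u - v| < ε := by
  have h1 := Int.abs_sub_lt_one_of_floor_eq_floor h
  rw [div_sub_div_same, abs_div, abs_of_pos hε, div_lt_one hε] at h1
  exact h1

/-- Finite bound on the cardinality of separated sets. -/
noncomputable def sepBound (ε : ℝ) : ℕ :=
  (Fintype.piFinset (fun _ : Fin ⌈2 / ε⌉₊ =>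
    (Finset.Icc (0:ℤ) ⌊1 / ε⌋) ×ˢ (Finset.Icc (0:ℤ) ⌊1 / ε⌋))).card

lemma card_sep_le (ε : ℝ) (hε : 0 < ε) (n : ℕ) (E : Finset YSpace)
    (hE : IsSeparatedSet distY gY n ε ↑E) : E.card ≤ sepBound ε := by
  set J := ⌈2 / ε⌉₊ with hJdef
  set K := ⌊1 / ε⌋ with hKdef
  set φ : YSpace → (Fin J → ℤ × ℤ) := fun x i =>
    (⌊(iotaY (compSeq gY i.1 x)).1 / ε⌋, ⌊(iotaY (compSeq gY i.1 x)).2 / ε⌋) with hφ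
  apply Finset.card_le_card_of_injOn φ
  · intro x _
    rw [Finset.mem_coe, Fintype.mem_piFinset]
    intro i
    rw [Finset.mem_product, Finset.mem_Icc, Finset.mem_Icc]
    obtain ⟨h1, h2, h3, h4⟩ := iotaY_mem (compSeq gY i.1 x)
    refine ⟨⟨Int.floor_nonneg.mpr (by positivity), Int.floor_le_floor (by gcongr)⟩,
      ⟨Int.floor_nonneg.mpr (by positivity), Int.floor_le_floor (by gcongr)⟩⟩
  · intro x hx y hy hxy
    by_contra hne
    obtain ⟨j, hjn, hj⟩ := hE x hx y hy hne
    rcases Nat.lt_or_ge j J with hjJ | hjJ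
    · have h := congrFun hxy (⟨j, hjJ⟩ : Fin J)
      have h1 : ⌊(iotaY (compSeq gY j x)).1 / ε⌋ = ⌊(iotaY (compSeq gY j y)).1 / ε⌋ :=
        congrArg Prod.fst h
      have h2 : ⌊(iotaY (compSeq gY j x)).2 / ε⌋ = ⌊(iotaY (compSeq gY j y)).2 / ε⌋ :=
        congrArg Prod.snd h
      have hd : distY (compSeq gY j x) (compSeq gY j y) < ε := by
        rw [distY, Prod.dist_eq]
        apply max_lt
        · rw [Real.dist_eq]; exact abs_sub_lt_of_floor_div_eq hε h1
        · rw [Real.dist_eq]; exact abs_sub_lt_of_floor_div_eq hε h2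
      exact absurd hj (not_lt.mpr hd.le)
    · have hJ1 : 1 ≤ J := Nat.ceil_pos.mpr (by positivity)
      have hj1 : 1 ≤ j := hJ1.trans hjJ
      have hjpos : (0:ℝ) < (j:ℝ) := by exact_mod_cast hj1
      have hd : distY (compSeq gY j x) (compSeq gY j y) ≤ 2 / (j:ℝ) := by
        rw [distY]
        calc dist (iotaY (compSeq gY j x)) (iotaY (compSeq gY j y))
            ≤ dist (iotaY (compSeq gY j x)) (((0:ℝ), (0:ℝ)))
              + dist (((0:ℝ), (0:ℝ))) (iotaY (compSeq gY j y)) := dist_triangle _ _ _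
          _ ≤ 1 / (j:ℝ) + 1 / (j:ℝ) := by
              refine add_le_add (dist_compSeq_le x j hj1) ?_
              rw [dist_comm]
              exact dist_compSeq_le y j hj1
          _ = 2 / (j:ℝ) := by ring
      have hεj : 2 / (j:ℝ) ≤ ε := by
        have hJle : 2 / ε ≤ (J:ℝ) := Nat.le_ceil _
        have hjR : 2 / ε ≤ (j:ℝ) := hJle.trans (by exact_mod_cast hjJ)
        rw [div_le_iff₀ hjpos]
        calc (2:ℝ) = ε * (2 / ε) := by field_simp
          _ ≤ ε * (j:ℝ) := mul_le_mul_of_nonneg_left hjR hε.le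
      exact absurd hj (not_lt.mpr (hd.trans hεj))

lemma sepNum_le_sepBound (ε : ℝ) (hε : 0 < ε) (n : ℕ) :
    sepNum distY gY n ε ≤ sepBound ε := by
  apply csSup_le
  · refine ⟨0, ∅, ?_, Finset.card_empty⟩
    intro x hx
    simp at hx
  · rintro c ⟨E, hE, rfl⟩
    exact card_sep_le ε hε n E hE

lemma one_le_sepNum (ε : ℝ) (hε : 0 < ε) (n : ℕ) : 1 ≤ sepNum distY gY n ε := by
  apply le_csSup
  · refine ⟨sepBound ε, ?_⟩
    rintro c ⟨E, hE, rfl⟩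
    exact card_sep_le ε hε n E hE
  · refine ⟨({Sum.inl ()} : Finset YSpace), ?_, Finset.card_singleton _⟩
    intro x hx y hy hxy
    exfalso
    apply hxy
    rw [Finset.mem_coe] at hx hy
    rw [Finset.mem_singleton.mp hx, Finset.mem_singleton.mp hy]

lemma limsup_sep_eq_zero (ε : ℝ) (hε : 0 < ε) :
    atTop.limsup (fun n : ℕ =>
      ((Real.log (sepNum distY gY n ε) / n : ℝ) : EReal)) = 0 := by
  have h0 : Tendsto (fun n : ℕ => Real.log (sepNum distY gY n ε) / n) atTop (nhds 0) := by
    apply squeeze_zero (g := fun n : ℕ => Real.log (sepBound ε) / n)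
    · intro n
      exact div_nonneg (Real.log_nonneg (by exact_mod_cast one_le_sepNum ε hε n))
        (Nat.cast_nonneg n)
    · intro n
      gcongr
      · have h1 : 0 < sepNum distY gY n ε := one_le_sepNum ε hε n
        exact_mod_cast h1
      · exact_mod_cast sepNum_le_sepBound ε hε n
    · exact tendsto_const_div_atTop_nhds_zero_nat _
  have h1 : Tendsto (fun n : ℕ =>
      ((Real.log (sepNum distY gY n ε) / n : ℝ) : EReal)) atTop (nhds ((0:ℝ) : EReal)) :=
    EReal.tendsto_coe.mpr h0
  rw [EReal.coe_zero] at h1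
  exact h1.limsup_eq

theorem entropy_Y_eq_zero : nadsEntropy distY gY = 0 := by
  unfold nadsEntropy
  apply le_antisymm
  · apply iSup_le
    intro ε
    apply iSup_le
    intro hε
    exact (limsup_sep_eq_zero ε hε).le
  · refine le_trans (limsup_sep_eq_zero 1 one_pos).ge ?_
    exact le_iSup₂ (f := fun (ε : ℝ) (_ : 0 < ε) =>
      atTop.limsup fun n : ℕ => ((Real.log (sepNum distY gY n ε) / n : ℝ) : EReal)) 1 one_pos
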